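/- Let R be a commutative ring, s, t ∈ R, and let 0 ≤ ℓ ≤ n be natural numbers. Then P_{n,ℓ}(s,t) = Σ_{j=0}^{ℓ} C(ℓ,j) · (-1)^j · s^j · P_{n-j,0}(s,t), where P_{n,ℓ}(s,t) is the permanent of the n×n matrix having n-ℓ diagonal entries equal to s+t and all other entries equal to t, and P_{m,0}(s,t) = per(sI_m + tJ_m). -/
import Mathlib

open Finset

/-- The permanent of a square matrix: `per(M) = Σ_{σ} Π_i M_{i, σ(i)}`. -/
def permanent {α : Type*} [Fintype α] [DecidableEq α] {R : Type*} [CommSemiring R]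
    (M : Matrix α α R) : R :=
  ∑ σ : Equiv.Perm α, ∏ i, M i (σ i)

/-- The `n×n` matrix `M_{n,ℓ}(s,t)` whose first `n-ℓ` diagonal entries are `s+t`
and all of whose other entries are `t`: the `(i,j)`-entry is
`t + s·[i = j and i ≤ n-ℓ]` (`0`-indexed: `i < n-ℓ`). -/
def Mmat {R : Type*} [CommRing R] (n ℓ : ℕ) (s t : R) : Matrix (Fin n) (Fin n) R :=
  Matrix.of fun i j => t + if i = j ∧ (i : ℕ) < n - ℓ then s else 0

/-- `P_{n,ℓ}(s,t) = per(M_{n,ℓ}(s,t))`. -/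
def P {R : Type*} [CommRing R] (n ℓ : ℕ) (s t : R) : R :=
  permanent (Mmat n ℓ s t)

/-- Closed form: `Fcf s t n d = Σ_k C(d,k) s^k t^(n-k) (n-k)!`. -/
def Fcf {R : Type*} [CommRing R] (s t : R) (n d : ℕ) : R :=
  ∑ k ∈ Finset.range (d + 1), (d.choose k : R) * s ^ k * t ^ (n - k) * ((n - k).factorial : R)

lemma prod_ite_const' {R : Type*} [CommRing R] {α : Type*} (S : Finset α)
    (p : α → Prop) [DecidablePred p] (s : R) :
    ∏ i ∈ S, (if p i then s else 0) = if ∀ i ∈ S, p i then s ^ S.card else 0 := by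
  split_ifs with h
  · rw [Finset.prod_congr rfl (fun i hi => if_pos (h i hi)), Finset.prod_const]
  · push_neg at h; obtain ⟨i, hi, hpi⟩ := h; exact Finset.prod_eq_zero hi (if_neg hpi)

lemma card_fixing (n : ℕ) (S : Finset (Fin n)) :
    Fintype.card {σ : Equiv.Perm (Fin n) // ∀ i ∈ S, σ i = i} = (n - S.card).factorial := by
  have e : {σ : Equiv.Perm (Fin n) // ∀ i ∈ S, σ i = i} ≃ Equiv.Perm {x : Fin n // x ∉ S} := by
    refine (Equiv.subtypeEquivRight ?_).trans
      (Equiv.Perm.subtypeEquivSubtypePerm (fun x : Fin n => x ∉ S)).symm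
    intro f
    constructor
    · intro hf a ha
      exact hf a (not_not.mp ha)
    · intro hf i hi
      exact hf i (not_not.mpr hi)
  rw [Fintype.card_congr e, Fintype.card_perm, Fintype.card_subtype_compl, Fintype.card_coe,
    Fintype.card_fin]

lemma card_filter_lt (n m : ℕ) (h : m ≤ n) :
    ((univ : Finset (Fin n)).filter (fun i : Fin n => (i : ℕ) < m)).card = m := by
  rw [← Fintype.card_subtype]
  exact Fintype.card_congr
    ⟨fun i => ⟨(i : Fin n), i.2⟩, fun j => ⟨⟨j, lt_of_lt_of_le j.2 h⟩, j.2⟩,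
      fun i => by ext; rfl, fun j => by ext; rfl⟩ |>.trans (Fintype.card_fin m)

lemma Fcf_rec {R : Type*} [CommRing R] (s t : R) (n d : ℕ) (h : d + 1 ≤ n) :
    Fcf s t n (d + 1) = Fcf s t n d + s * Fcf s t (n - 1) d := by
  unfold Fcf
  rw [Finset.sum_range_succ' (fun k => ((d+1).choose k : R) * s ^ k * t ^ (n - k) * ((n - k).factorial : R)) (d+1)]
  have e1 : ∀ k, ((d+1).choose (k+1) : R) = (d.choose k : R) + (d.choose (k+1) : R) := by
    intro k; rw [Nat.choose_succ_succ]; push_cast; ring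
  calc
    (∑ k ∈ range (d + 1), ((d+1).choose (k+1) : R) * s ^ (k+1) * t ^ (n - (k+1)) * ((n - (k+1)).factorial : R))
        + ((d+1).choose 0 : R) * s ^ 0 * t ^ (n - 0) * ((n - 0).factorial : R)
      = ((∑ k ∈ range (d + 1), (d.choose (k+1) : R) * s ^ (k+1) * t ^ (n - (k+1)) * ((n - (k+1)).factorial : R))
        + (d.choose 0 : R) * s ^ 0 * t ^ (n - 0) * ((n - 0).factorial : R))
        + ∑ k ∈ range (d + 1), (d.choose k : R) * s ^ (k+1) * t ^ (n - (k+1)) * ((n - (k+1)).factorial : R) := by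
        simp only [e1, add_mul, Finset.sum_add_distrib]
        simp only [Nat.choose_zero_right]
        ring
    _ = _ := by
        rw [← Finset.sum_range_succ' (fun k => (d.choose k : R) * s ^ k * t ^ (n - k) * ((n - k).factorial : R)) (d+1)]
        rw [Finset.sum_range_succ]
        simp only [Nat.choose_succ_self, Nat.cast_zero, zero_mul]
        rw [Finset.mul_sum]
        congr 1
        · ring
        refine Finset.sum_congr rfl fun k hk => ?_
        rw [mem_range] at hk
        have h1 : n - (k+1) = n - 1 - k := by omega
        rw [h1]; ring

lemma Fcf_expand {R : Type*} [CommRing R] (s t : R) :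
    ∀ (ℓ n : ℕ), ℓ ≤ n →
      Fcf s t n (n - ℓ) =
        ∑ j ∈ Finset.range (ℓ + 1),
          (ℓ.choose j : R) * (-1 : R) ^ j * s ^ j * Fcf s t (n - j) (n - j) := by
  intro ℓ
  induction ℓ with
  | zero => intro n _; simp
  | succ ℓ ih =>
    intro n h
    have h1 : ℓ ≤ n := by omega
    have h2 : ℓ ≤ n - 1 := by omega
    have key : ∑ j ∈ Finset.range (ℓ + 2),
        ((ℓ+1).choose j : R) * (-1 : R) ^ j * s ^ j * Fcf s t (n - j) (n - j)
        = Fcf s t n (n - ℓ) - s * Fcf s t (n-1) ((n-1) - ℓ) := by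
      rw [Finset.sum_range_succ' (fun j => ((ℓ+1).choose j : R) * (-1 : R) ^ j * s ^ j * Fcf s t (n - j) (n - j)) (ℓ+1)]
      have e1 : ∀ k : ℕ, ((ℓ+1).choose (k+1) : R) = (ℓ.choose k : R) + (ℓ.choose (k+1) : R) := by
        intro k; rw [Nat.choose_succ_succ]; push_cast; ring
      simp only [e1, add_mul, Finset.sum_add_distrib]
      have eA : (∑ k ∈ range (ℓ + 1), (ℓ.choose (k+1) : R) * (-1:R) ^ (k+1) * s ^ (k+1) * Fcf s t (n - (k+1)) (n - (k+1)))
          + ((ℓ+1).choose 0 : R) * (-1:R) ^ 0 * s ^ 0 * Fcf s t (n - 0) (n - 0)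
          = Fcf s t n (n - ℓ) := by
        have : ((ℓ+1).choose 0 : R) * (-1:R) ^ 0 * s ^ 0 * Fcf s t (n - 0) (n - 0)
            = (ℓ.choose 0 : R) * (-1:R) ^ 0 * s ^ 0 * Fcf s t (n - 0) (n - 0) := by simp
        rw [this,
          ← Finset.sum_range_succ' (fun j => (ℓ.choose j : R) * (-1 : R) ^ j * s ^ j * Fcf s t (n - j) (n - j)) (ℓ+1),
          Finset.sum_range_succ]
        simp only [Nat.choose_succ_self, Nat.cast_zero, zero_mul, add_zero]
        exact (ih n h1).symm
      have eB : (∑ k ∈ range (ℓ + 1), (ℓ.choose k : R) * (-1:R) ^ (k+1) * s ^ (k+1) * Fcf s t (n - (k+1)) (n - (k+1)))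
          = - (s * Fcf s t (n-1) ((n-1) - ℓ)) := by
        rw [ih (n-1) h2, Finset.mul_sum, ← Finset.sum_neg_distrib]
        refine Finset.sum_congr rfl fun k hk => ?_
        rw [mem_range] at hk
        have : n - (k+1) = n - 1 - k := by omega
        rw [this]; ring
      rw [← eA, eB]; ring
    rw [key]
    have hrec := Fcf_rec s t n (n - (ℓ+1)) (by omega)
    have e2 : n - (ℓ+1) + 1 = n - ℓ := by omega
    have h3 : n - 1 - ℓ = n - (ℓ+1) := by omega
    rw [e2] at hrec
    rw [h3]
    linear_combination -hrec

lemma P_eq {R : Type*} [CommRing R] (s t : R) (n ℓ : ℕ) :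
    P n ℓ s t = Fcf s t n (n - ℓ) := by
  classical
  set D : Finset (Fin n) := (univ : Finset (Fin n)).filter (fun i => (i : ℕ) < n - ℓ) with hD
  have step1 : ∀ σ : Equiv.Perm (Fin n),
      ∏ i, (Mmat n ℓ s t) i (σ i) =
        ∑ S ∈ (univ : Finset (Fin n)).powerset,
          (if ∀ i ∈ S, (i = σ i ∧ (i : ℕ) < n - ℓ) then s ^ S.card else 0) * t ^ (n - S.card) := by
    intro σ
    have : ∀ i : Fin n, (Mmat n ℓ s t) i (σ i) =
        (if i = σ i ∧ (i : ℕ) < n - ℓ then s else 0) + t := by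
      intro i; simp [Mmat]; ring
    rw [Finset.prod_congr rfl (fun i _ => this i), Finset.prod_add]
    refine Finset.sum_congr rfl fun S _ => ?_
    rw [prod_ite_const', Finset.prod_const,
      Finset.card_sdiff_of_subset (Finset.subset_univ S), Finset.card_univ, Fintype.card_fin]
    convert rfl
  have inner : ∀ S : Finset (Fin n), (∀ i ∈ S, (i : ℕ) < n - ℓ) →
      (∑ σ : Equiv.Perm (Fin n),
        (if ∀ i ∈ S, (i = σ i ∧ (i : ℕ) < n - ℓ) then s ^ S.card else 0) * t ^ (n - S.card))
      = ((n - S.card).factorial : R) * s ^ S.card * t ^ (n - S.card) := by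
    intro S hS
    have hc : ∀ σ : Equiv.Perm (Fin n),
        (if ∀ i ∈ S, (i = σ i ∧ (i : ℕ) < n - ℓ) then s ^ S.card else 0)
          = (if ∀ i ∈ S, σ i = i then s ^ S.card else 0) := by
      intro σ
      refine if_congr ?_ rfl rfl
      constructor
      · intro hf i hi; exact (hf i hi).1.symm
      · intro hf i hi; exact ⟨(hf i hi).symm, hS i hi⟩
    simp only [hc]
    rw [← Finset.sum_mul]
    rw [← Finset.sum_filter, Finset.sum_const, ← Fintype.card_subtype, card_fixing,
      nsmul_eq_mul, mul_assoc]
  have hPsum : P n ℓ s t =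
      ∑ S ∈ D.powerset, ((n - S.card).factorial : R) * s ^ S.card * t ^ (n - S.card) := by
    unfold P permanent
    rw [Finset.sum_congr rfl (fun σ _ => step1 σ), Finset.sum_comm]
    rw [← Finset.sum_subset (Finset.powerset_mono.mpr (Finset.subset_univ D))
      (fun S _ hS => ?_)]
    · refine Finset.sum_congr rfl fun S hS => ?_
      rw [Finset.mem_powerset] at hS
      exact inner S (fun i hi => (Finset.mem_filter.mp (hS hi)).2)
    · rw [Finset.mem_powerset] at hS
      refine Finset.sum_eq_zero fun σ _ => ?_
      rw [if_neg, zero_mul]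
      intro hf
      exact hS fun i hi => Finset.mem_filter.mpr ⟨Finset.mem_univ i, (hf i hi).2⟩
  rw [hPsum]
  have hcard : D.card = n - ℓ := card_filter_lt n (n - ℓ) (Nat.sub_le n ℓ)
  rw [Finset.sum_powerset_apply_card
    (fun m => ((n - m).factorial : R) * s ^ m * t ^ (n - m)), hcard]
  unfold Fcf
  refine Finset.sum_congr rfl fun k _ => ?_
  rw [nsmul_eq_mul]
  ring

/-- `P_{n,ℓ}(s,t) = Σ_{j=0}^{ℓ} C(ℓ,j) (-1)^j s^j P_{n-j,0}(s,t)`, where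
`P_{m,0}(s,t) = per(sI_m + tJ_m)`. -/
theorem stmt14 {R : Type*} [CommRing R] (s t : R) (n ℓ : ℕ) (h : ℓ ≤ n) :
    P n ℓ s t =
      ∑ j ∈ Finset.range (ℓ + 1),
        (ℓ.choose j : R) * (-1 : R) ^ j * s ^ j * P (n - j) 0 s t := by
  rw [P_eq s t n ℓ, Fcf_expand s t ℓ n h]
  refine Finset.sum_congr rfl fun j _ => ?_
  rw [P_eq s t (n - j) 0, Nat.sub_zero]
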